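/- For every t ≥ 4, the graph obtained from the complete bipartite graph K_{t−1,t−1} by deleting a perfect matching (equivalently, the induced subgraph of B_t obtained by deleting its two vertices of degree t) has b-chromatic number exactly t − 1. -/
import Mathlib

open SimpleGraph

/-- The degree of a vertex `v` in a simple graph `G`. -/
noncomputable def vdeg {V : Type*} (G : SimpleGraph V) (v : V) : ℕ :=
  Nat.card {w // G.Adj v w}

/-- A Grundy coloring of `G` with `k` colors: a proper coloring whose `k` color classes are
all nonempty (surjectivity) and such that every vertex of a class has a neighbor in every
smaller-indexed class. -/
def IsGrundyColoring {V : Type*} (G : SimpleGraph V) {k : ℕ} (C : V → Fin k) : Prop :=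
  (∀ v w, G.Adj v w → C v ≠ C w) ∧
  Function.Surjective C ∧
  (∀ v : V, ∀ i : Fin k, i < C v → ∃ w, G.Adj v w ∧ C w = i)

/-- The Grundy number of `G`: the largest `k` admitting a Grundy coloring with `k` colors. -/
noncomputable def grundyNum {V : Type*} (G : SimpleGraph V) : ℕ :=
  sSup {k | ∃ C : V → Fin k, IsGrundyColoring G C}

/-- A b-coloring of `G` with `k` colors: a proper coloring such that every color class
contains a vertex having a neighbor in each of the other classes (hence all classes are
nonempty). -/
def IsBColoring {V : Type*} (G : SimpleGraph V) {k : ℕ} (C : V → Fin k) : Prop :=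
  (∀ v w, G.Adj v w → C v ≠ C w) ∧
  (∀ i : Fin k, ∃ v, C v = i ∧ ∀ j : Fin k, j ≠ i → ∃ w, G.Adj v w ∧ C w = j)

/-- The b-chromatic number of `G`: the largest `k` admitting a b-coloring with `k` colors. -/
noncomputable def bChrom {V : Type*} (G : SimpleGraph V) : ℕ :=
  sSup {k | ∃ C : V → Fin k, IsBColoring G C}

/-- The crown graph: the complete bipartite graph `K_{n,n}` minus a perfect matching;
`Sum.inl i` is adjacent to `Sum.inr j` iff `i ≠ j`. -/
def crownGraph (n : ℕ) : SimpleGraph (Fin n ⊕ Fin n) :=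
  SimpleGraph.fromRel (fun a b =>
    match a, b with
    | Sum.inl i, Sum.inr j => i ≠ j
    | _, _ => False)

lemma crown_adj_lr {n : ℕ} {i j : Fin n} :
    (crownGraph n).Adj (Sum.inl i) (Sum.inr j) ↔ i ≠ j := by
  simp [crownGraph, SimpleGraph.fromRel_adj]

lemma crown_adj_rl {n : ℕ} {i j : Fin n} :
    (crownGraph n).Adj (Sum.inr i) (Sum.inl j) ↔ j ≠ i := by
  simp [crownGraph, SimpleGraph.fromRel_adj]

lemma crown_adj_ll {n : ℕ} {i j : Fin n} :
    ¬ (crownGraph n).Adj (Sum.inl i) (Sum.inl j) := by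
  simp [crownGraph, SimpleGraph.fromRel_adj]

lemma crown_adj_rr {n : ℕ} {i j : Fin n} :
    ¬ (crownGraph n).Adj (Sum.inr i) (Sum.inr j) := by
  simp [crownGraph, SimpleGraph.fromRel_adj]

lemma count_aux {n k : ℕ} (i : Fin k) (a : Fin n) (f : Fin n → Fin k)
    (h : ∀ j : Fin k, j ≠ i → ∃ b : Fin n, b ≠ a ∧ f b = j) : k - 1 ≤ n - 1 := by
  classical
  choose g hg1 hg2 using fun p : {j : Fin k // j ≠ i} => h p.1 p.2
  have inj : Function.Injective (fun p : {j : Fin k // j ≠ i} => (⟨g p, hg1 p⟩ : {b : Fin n // b ≠ a})) := by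
    intro p q hpq
    have : g p = g q := congrArg Subtype.val hpq
    have : p.1 = q.1 := by rw [← hg2 p, ← hg2 q, this]
    exact Subtype.ext this
  have := Fintype.card_le_of_injective _ inj
  have h1 : Fintype.card {j : Fin k // j ≠ i} = k - 1 := by
    simp [Fintype.card_subtype_compl, Fintype.card_subtype_eq]
  have h2 : Fintype.card {b : Fin n // b ≠ a} = n - 1 := by
    simp [Fintype.card_subtype_compl, Fintype.card_subtype_eq]
  omega

lemma crown_upper {n k : ℕ} (hn : 1 ≤ n) (C : Fin n ⊕ Fin n → Fin k)
    (hC : IsBColoring (crownGraph n) C) : k ≤ n := by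
  rcases Nat.eq_zero_or_pos k with hk | hk
  · omega
  obtain ⟨hp, hb⟩ := hC
  obtain ⟨v, hv, hw⟩ := hb ⟨0, hk⟩
  have hkn : k - 1 ≤ n - 1 := by
    match v with
    | Sum.inl a =>
      refine count_aux ⟨0, hk⟩ a (fun b => C (Sum.inr b)) (fun j hj => ?_)
      obtain ⟨w, hadj, hcw⟩ := hw j hj
      match w with
      | Sum.inl b => exact absurd hadj crown_adj_ll
      | Sum.inr b =>
        exact ⟨b, fun h => (crown_adj_lr.mp hadj) (by rw [h]), hcw⟩
    | Sum.inr a =>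
      refine count_aux ⟨0, hk⟩ a (fun b => C (Sum.inl b)) (fun j hj => ?_)
      obtain ⟨w, hadj, hcw⟩ := hw j hj
      match w with
      | Sum.inr b => exact absurd hadj crown_adj_rr
      | Sum.inl b => exact ⟨b, crown_adj_rl.mp hadj, hcw⟩
  omega

lemma crown_lower (n : ℕ) : IsBColoring (crownGraph n) (Sum.elim id id : Fin n ⊕ Fin n → Fin n) := by
  constructor
  · rintro (x | x) (y | y) hadj
    · exact absurd hadj crown_adj_ll
    · exact crown_adj_lr.mp hadj
    · exact fun h => (crown_adj_rl.mp hadj) h.symm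
    · exact absurd hadj crown_adj_rr
  · intro i
    refine ⟨Sum.inl i, rfl, fun j hj => ⟨Sum.inr j, crown_adj_lr.mpr (Ne.symm hj), rfl⟩⟩

/-- For every `t ≥ 4`, the graph obtained from `K_{t-1,t-1}` by deleting a perfect
matching has b-chromatic number exactly `t - 1`. -/
theorem stmt10 (t : ℕ) (ht : 4 ≤ t) : bChrom (crownGraph (t - 1)) = t - 1 := by
  set n := t - 1 with hn
  have hn1 : 1 ≤ n := by omega
  have hmem : n ∈ {k | ∃ C : Fin n ⊕ Fin n → Fin k, IsBColoring (crownGraph n) C} :=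
    ⟨_, crown_lower n⟩
  have hub : ∀ k ∈ {k | ∃ C : Fin n ⊕ Fin n → Fin k, IsBColoring (crownGraph n) C}, k ≤ n := by
    rintro k ⟨C, hC⟩
    exact crown_upper hn1 C hC
  exact le_antisymm (csSup_le ⟨n, hmem⟩ hub) (le_csSup ⟨n, hub⟩ hmem)
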